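/- Let n and m be positive integers and let a, d1, d2 be elements of Z/nZ. If the doubly arithmetic triangle DAT(a,d1,d2,m) = {a + i·d1 + j·d2 : 0 ≤ i ≤ m-1, 0 ≤ j ≤ m-1-i} (as a multiset) is balanced in Z/nZ, then d1, d2 and d1 - d2 are all invertible in Z/nZ. -/

import Mathlib

def DAT (n : ℕ) (a d1 d2 : ZMod n) (m : ℕ) : Multiset (ZMod n) :=
  ((Finset.range m ×ˢ Finset.range m).filter (fun p => p.1 + p.2 < m)).val.map
    (fun p => a + p.1 • d1 + p.2 • d2)

def IsBalanced {n : ℕ} (M : Multiset (ZMod n)) : Prop :=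
  ∀ x y : ZMod n, M.count x = M.count y

open Finset

/-- The triangular index set. -/
def Tri (m : ℕ) : Finset (ℕ × ℕ) :=
  (Finset.range m ×ˢ Finset.range m).filter (fun p => p.1 + p.2 < m)

lemma mem_Tri {m : ℕ} {q : ℕ × ℕ} : q ∈ Tri m ↔ q.1 + q.2 < m := by
  simp only [Tri, Finset.mem_filter, Finset.mem_product, Finset.mem_range]
  omega

lemma DAT_eq (n : ℕ) (a d1 d2 : ZMod n) (m : ℕ) :
    DAT n a d1 d2 m = (Tri m).val.map (fun p => a + p.1 • d1 + p.2 • d2) := rfl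

lemma Tri_map_perm {m : ℕ} (σ : ℕ × ℕ → ℕ × ℕ) (hmem : ∀ q ∈ Tri m, σ q ∈ Tri m)
    (hinv : ∀ q ∈ Tri m, σ (σ q) = q) : (Tri m).val.map σ = (Tri m).val := by
  have hinj : Set.InjOn σ (Tri m) := fun x hx y hy hxy => by
    rw [← hinv x hx, hxy, hinv y hy]
  have himg : (Tri m).image σ = Tri m := by
    apply Finset.eq_of_subset_of_card_le
    · intro x hx
      obtain ⟨q, hq, rfl⟩ := Finset.mem_image.1 hx
      exact hmem q hq
    · rw [Finset.card_image_of_injOn hinj]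
  calc (Tri m).val.map σ = ((Tri m).image σ).val := (Finset.image_val_of_injOn hinj).symm
    _ = (Tri m).val := by rw [himg]

lemma DAT_swap (n : ℕ) (a d1 d2 : ZMod n) (m : ℕ) :
    DAT n a d2 d1 m = DAT n a d1 d2 m := by
  rw [DAT_eq, DAT_eq]
  have hperm : (Tri m).val.map Prod.swap = (Tri m).val := by
    apply Tri_map_perm
    · rintro ⟨i, j⟩ hq
      rw [mem_Tri] at *
      simpa using by omega
    · intro q _; simp
  conv_lhs => rw [← hperm, Multiset.map_map]
  apply Multiset.map_congr rfl
  intro q _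
  simp only [Function.comp_apply, Prod.fst_swap, Prod.snd_swap]
  ring

lemma DAT_reflect (n : ℕ) (a d1 d2 : ZMod n) (m : ℕ) (hm : 0 < m) :
    DAT n (a + (m - 1) • d2) (d1 - d2) (-d2) m = DAT n a d1 d2 m := by
  rw [DAT_eq, DAT_eq]
  set σ : ℕ × ℕ → ℕ × ℕ := fun q => (q.1, m - 1 - q.1 - q.2) with hσ
  have hperm : (Tri m).val.map σ = (Tri m).val := by
    apply Tri_map_perm
    · rintro ⟨i, j⟩ hq
      rw [mem_Tri] at *
      simp only [hσ]
      omega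
    · rintro ⟨i, j⟩ hq
      rw [mem_Tri] at hq
      simp only [hσ, Prod.mk.injEq, true_and]
      omega
  conv_lhs => rw [← hperm, Multiset.map_map]
  apply Multiset.map_congr rfl
  rintro ⟨i, j⟩ hq
  rw [← Finset.mem_def, mem_Tri] at hq
  replace hq : i + j < m := hq
  simp only [Function.comp_apply, hσ]
  have h1 : m - 1 - i - j = (m - 1) - (i + j) := by omega
  have h2 : i + j ≤ m - 1 := by omega
  rw [h1, sub_nsmul _ h2]
  simp only [smul_neg, smul_sub, add_smul]
  abel

/-- For a finite type, `countP` is the sum of counts over elements satisfying the predicate. -/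
lemma countP_eq_sum {α : Type*} [Fintype α] [DecidableEq α] (M : Multiset α)
    (p : α → Prop) [DecidablePred p] :
    M.countP p = ∑ x ∈ Finset.univ.filter p, M.count x := by
  induction M using Multiset.induction with
  | empty => simp
  | cons a s ih =>
    rw [Multiset.countP_cons]
    simp only [Multiset.count_cons]
    rw [Finset.sum_add_distrib, ← ih]
    congr 1
    rw [Finset.sum_ite_eq' (Finset.univ.filter p) a (fun _ => 1)]
    simp [Finset.mem_filter]

lemma isUnit_of_balanced (n m : ℕ) (hn : 0 < n) (hm : 0 < m) (a d1 d2 : ZMod n)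
    (h : IsBalanced (DAT n a d1 d2 m)) : IsUnit d1 := by
  haveI : NeZero n := ⟨hn.ne'⟩
  by_contra hu
  -- find a prime dividing both n and d1.val
  have hval : ((d1.val : ℕ) : ZMod n) = d1 := ZMod.natCast_rightInverse d1
  have h1 : ¬ Nat.Coprime d1.val n := by
    intro hc
    exact hu (hval ▸ (ZMod.isUnit_iff_coprime d1.val n).2 hc)
  obtain ⟨p, pp, hpd⟩ := Nat.exists_prime_and_dvd h1
  have hpn : p ∣ n := hpd.trans (Nat.gcd_dvd_right _ _)
  have hpv : p ∣ d1.val := hpd.trans (Nat.gcd_dvd_left _ _)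
  haveI := Fact.mk pp
  set f : ZMod n →+* ZMod p := ZMod.castHom hpn (ZMod p) with hf
  have hfd1 : f d1 = 0 := by
    rw [← hval, map_natCast, ZMod.natCast_eq_zero_iff]
    exact hpv
  -- the countP of the fiber of y equals a triangle count
  have hcUP : ∀ y : ZMod p, (DAT n a d1 d2 m).countP (fun x => f x = y) =
      Multiset.card ((Tri m).val.filter (fun q => f a + q.2 • (f d2) = y)) := by
    intro y
    rw [DAT_eq, Multiset.countP_map]
    congr 1
    apply Multiset.filter_congr
    intro q _
    simp only [map_add, map_nsmul, hfd1, smul_zero, add_zero]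
  -- balancedness: the countP over any two fibers agree
  set c := (DAT n a d1 d2 m).count a with hc
  have hcount : ∀ y : ZMod p, (DAT n a d1 d2 m).countP (fun x => f x = y) =
      c * (Finset.univ.filter (fun x : ZMod n => f x = y)).card := by
    intro y
    rw [countP_eq_sum]
    rw [Finset.sum_congr rfl (fun x _ => h x a)]
    rw [Finset.sum_const, smul_eq_mul, mul_comm]
  have hfiber : ∀ y1 y2 : ZMod p,
      (Finset.univ.filter (fun x : ZMod n => f x = y1)).card =
      (Finset.univ.filter (fun x : ZMod n => f x = y2)).card := by
    intro y1 y2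
    set z : ZMod n := (((y2 - y1).val : ℕ) : ZMod n) with hz
    have hfz : f z = y2 - y1 := by
      rw [hz, map_natCast]
      exact ZMod.natCast_rightInverse (y2 - y1)
    apply Finset.card_bij' (fun x _ => x + z) (fun x _ => x - z)
    · intro x hx
      simp only [Finset.mem_filter, Finset.mem_univ, true_and] at hx ⊢
      rw [map_add, hx, hfz]; ring
    · intro x hx
      simp only [Finset.mem_filter, Finset.mem_univ, true_and] at hx ⊢
      rw [map_sub, hx, hfz]; ring
    · intro x _; ring
    · intro x _; ring
  have hkey' : ∀ y1 y2 : ZMod p,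
      ((Tri m).filter (fun q => f a + q.2 • (f d2) = y1)).card =
      ((Tri m).filter (fun q => f a + q.2 • (f d2) = y2)).card := by
    intro y1 y2
    have h12 : (DAT n a d1 d2 m).countP (fun x => f x = y1) =
        (DAT n a d1 d2 m).countP (fun x => f x = y2) := by
      rw [hcount, hcount, hfiber y1 y2]
    rw [hcUP, hcUP] at h12
    simpa [Finset.card, Finset.filter_val] using h12
  set e := f d2 with he
  by_cases hez : e = 0
  · -- all elements map to f a; compare fibers of f a and f a + 1
    have h1 : ((Tri m).filter (fun q => f a + q.2 • e = f a)).card =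
        ((Tri m).filter (fun q => f a + q.2 • e = f a + 1)).card := hkey' _ _
    have hA : (Tri m).filter (fun q => f a + q.2 • e = f a) = Tri m :=
      Finset.filter_true_of_mem (fun q _ => by rw [hez]; simp)
    have hB : (Tri m).filter (fun q => f a + q.2 • e = f a + 1) = ∅ :=
      Finset.filter_false_of_mem (fun q _ => by
        rw [hez]
        simp only [smul_zero, add_zero, left_eq_add]
        exact one_ne_zero)
    rw [hA, hB] at h1
    have h00 : ((0, 0) : ℕ × ℕ) ∈ Tri m := mem_Tri.2 (by simpa using hm)
    simp only [Finset.card_empty, Finset.card_eq_zero] at h1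
    rw [h1] at h00
    exact absurd h00 (Finset.notMem_empty _)
  · -- compare fibers of f a and f a + e
    have hsmul0 : ∀ j : ℕ, j • e = 0 ↔ (j : ZMod p) = 0 := by
      intro j
      rw [nsmul_eq_mul, mul_eq_zero]
      simp [hez]
    have hsmul1 : ∀ j : ℕ, j • e = e ↔ (j : ZMod p) = 1 := by
      intro j
      rw [nsmul_eq_mul, ← sub_eq_zero, ← sub_one_mul, mul_eq_zero]
      simp only [hez, or_false]
      rw [sub_eq_zero]
    have hmemS0 : ∀ q : ℕ × ℕ, q ∈ (Tri m).filter (fun q => f a + q.2 • e = f a) ↔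
        q ∈ Tri m ∧ ((q.2 : ℕ) : ZMod p) = 0 := by
      intro q
      rw [Finset.mem_filter, add_eq_left, hsmul0]
    have hmemS1 : ∀ q : ℕ × ℕ, q ∈ (Tri m).filter (fun q => f a + q.2 • e = f a + e) ↔
        q ∈ Tri m ∧ ((q.2 : ℕ) : ZMod p) = 1 := by
      intro q
      rw [Finset.mem_filter, add_right_inj, hsmul1]
    have h00 : ((0, 0) : ℕ × ℕ) ∈ (Tri m).filter (fun q => f a + q.2 • e = f a) := by
      rw [hmemS0]
      exact ⟨mem_Tri.2 (by simpa using hm), by simp⟩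
    have hlt : ((Tri m).filter (fun q => f a + q.2 • e = f a + e)).card <
        ((Tri m).filter (fun q => f a + q.2 • e = f a)).card := by
      have hle : ((Tri m).filter (fun q => f a + q.2 • e = f a + e)).card ≤
          (((Tri m).filter (fun q => f a + q.2 • e = f a)).erase ((0, 0) : ℕ × ℕ)).card := by
        apply Finset.card_le_card_of_injOn (fun q => (q.1 + 1, q.2 - 1))
        · intro q hq
          rw [Finset.mem_coe, hmemS1] at hq
          obtain ⟨hqT, hq1⟩ := hq
          rw [mem_Tri] at hqT
          have hq2pos : 0 < q.2 := Nat.pos_of_ne_zero (fun h0 => by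
            rw [h0, Nat.cast_zero] at hq1
            exact one_ne_zero hq1.symm)
          rw [Finset.mem_coe, Finset.mem_erase, hmemS0]
          refine ⟨by simp, mem_Tri.2 (by dsimp only; omega), ?_⟩
          rw [Nat.cast_sub hq2pos, hq1]
          simp
        · rintro ⟨i1, j1⟩ hq1 ⟨i2, j2⟩ hq2 hEq
          simp only [Finset.coe_filter, Set.mem_setOf_eq] at hq1 hq2
          have hj1' : ((j1 : ℕ) : ZMod p) = 1 := (hsmul1 j1).1 (by
            have := hq1.2; rwa [add_right_inj] at this)
          have hj1 : 0 < j1 := Nat.pos_of_ne_zero (fun h0 => by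
            rw [h0, Nat.cast_zero] at hj1'; exact one_ne_zero hj1'.symm)
          have hj2' : ((j2 : ℕ) : ZMod p) = 1 := (hsmul1 j2).1 (by
            have := hq2.2; rwa [add_right_inj] at this)
          have hj2 : 0 < j2 := Nat.pos_of_ne_zero (fun h0 => by
            rw [h0, Nat.cast_zero] at hj2'; exact one_ne_zero hj2'.symm)
          simp only [Prod.mk.injEq] at hEq ⊢
          omega
      exact lt_of_le_of_lt hle (Finset.card_erase_lt_of_mem h00)
    rw [hkey' (f a) (f a + e)] at hlt
    exact absurd rfl hlt.ne

theorem stmt0 (n m : ℕ) (hn : 0 < n) (hm : 0 < m) (a d1 d2 : ZMod n)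
    (h : IsBalanced (DAT n a d1 d2 m)) :
    IsUnit d1 ∧ IsUnit d2 ∧ IsUnit (d1 - d2) := by
  refine ⟨isUnit_of_balanced n m hn hm a d1 d2 h, ?_, ?_⟩
  · apply isUnit_of_balanced n m hn hm a d2 d1
    unfold IsBalanced
    rw [DAT_swap]
    exact h
  · apply isUnit_of_balanced n m hn hm (a + (m - 1) • d2) (d1 - d2) (-d2)
    unfold IsBalanced
    rw [DAT_reflect n a d1 d2 m hm]
    exact h
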